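/- In the Decision-Adv SP construction of Theorem 2: let c ∈ Û(Γ^d) be any extreme scenario and let A'_y ⊆ A_y be the set of arcs of A_y whose cost under c equals 1 (so |A'_y| ≤ Γ^d). If (y,z) is a 0-1 assignment of 𝕐 ∪ ℤ satisfying ϝ with y_i = 0 for every i such that e_{y_i} ∈ A'_y, then the path Y formed by concatenating the clause path π_1 (from s_1 to t_1), the arc (t_1,s_2), and the variable path π_2 (from s_2 to t_2) corresponding to (y,z) is a simple s–t path with |X∖Y| ≤ 2 (i.e., Y ∈ Φ^excl(X,2)), Y avoids all arcs of A'_y, and ∑_{e∈Y} c_e = 0. -/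

import Mathlib

namespace RRSP

/-- A simple directed `s`–`t` path in the digraph with arc set `A`, given as
the list of its (pairwise distinct) vertices. -/
def IsPath {V : Type*} (A : Set (V × V)) (s t : V) (p : List V) : Prop :=
  List.Chain' (fun u v => (u, v) ∈ A) p ∧ p.head? = some s ∧ p.getLast? = some t ∧ p.Nodup

/-- The arc set of a path given by its vertex list. -/
def pathArcs {V : Type*} [DecidableEq V] (p : List V) : Finset (V × V) :=
  (p.zip p.tail).toFinset

/-- `Φ`: the set of all simple `s`–`t` paths, each identified with its arc set. -/
def Phi {V : Type*} [DecidableEq V] (A : Set (V × V)) (s t : V) : Set (Finset (V × V)) :=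
  { X | ∃ p : List V, IsPath A s t p ∧ pathArcs p = X }

/-- A CNF formula with `m` clauses over variables `Fin N`: clause `j` is a list
of literals.  An assignment satisfies the formula if every clause contains a
true literal. -/
def Satisfies {m N : ℕ} (F : Fin m → List (Fin N × Bool)) (a : Fin N → Bool) : Prop :=
  ∀ j, ∃ l ∈ F j, a l.1 = l.2

/-- Nodes of the variable–clause graph built from a CNF formula with `m`
clauses over `N` variables whose gadgets are chained:
`junction i` are the `N+1` junction nodes between consecutive gadgets
(`junction 0` is the entry of the first gadget, `junction N` the exit of the
last one), `upper i j` (resp. `lower i j`) is the internal node `v̄^{C_j}`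
(resp. `v^{C_j}`) of the gadget of variable `i`, `cl1 j` and `cl2 j` are the
clause nodes `C_j^{(1)}`, `C_j^{(2)}`, and `s1`, `t1` are the terminals of the
clause path. -/
inductive Node (N m : ℕ) where
  | junction : Fin (N + 1) → Node N m
  | upper : Fin N → Fin m → Node N m
  | lower : Fin N → Fin m → Node N m
  | cl1 : Fin m → Node N m
  | cl2 : Fin m → Node N m
  | s1 : Node N m
  | t1 : Node N m
deriving DecidableEq

variable {N m : ℕ}

/-- The `k`-th node on the upper path of the gadget of variable `i`
(`k = 0` is the entry junction, `k = m+1` the exit junction). -/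
def upNode (i : Fin N) (k : Fin (m + 2)) : Node N m :=
  if h0 : k.val = 0 then .junction i.castSucc
  else if h1 : k.val = m + 1 then .junction i.succ
  else .upper i ⟨k.val - 1, by have := k.isLt; omega⟩

/-- The `k`-th node on the lower path of the gadget of variable `i`. -/
def lowNode (i : Fin N) (k : Fin (m + 2)) : Node N m :=
  if h0 : k.val = 0 then .junction i.castSucc
  else if h1 : k.val = m + 1 then .junction i.succ
  else .lower i ⟨k.val - 1, by have := k.isLt; omega⟩

/-- The `m+1` arcs of the upper path of the gadget of variable `i`
(traversing it encodes assigning `i := 0`). -/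
def upperArcs (i : Fin N) : Set (Node N m × Node N m) :=
  Set.range fun k : Fin (m + 1) => (upNode i k.castSucc, upNode i k.succ)

/-- The `m+1` arcs of the lower path of the gadget of variable `i`
(traversing it encodes assigning `i := 1`). -/
def lowerArcs (i : Fin N) : Set (Node N m × Node N m) :=
  Set.range fun k : Fin (m + 1) => (lowNode i k.castSucc, lowNode i k.succ)

/-- All arcs of the variable gadgets. -/
def gadgetArcs : Set (Node N m × Node N m) := ⋃ i, upperArcs i ∪ lowerArcs i

/-- The literal arcs of clause `j`: for a positive literal `v` the arcs
`(C_j^{(1)}, v̄^{C_j})` and `(v̄^{C_j}, C_j^{(2)})`, for a negative literal `¬v`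
the arcs `(C_j^{(1)}, v^{C_j})` and `(v^{C_j}, C_j^{(2)})`. -/
def litArcs (F : Fin m → List (Fin N × Bool)) (j : Fin m) :
    Set (Node N m × Node N m) :=
  { e | ∃ l ∈ F j,
      (l.2 = true ∧ (e = (.cl1 j, .upper l.1 j) ∨ e = (.upper l.1 j, .cl2 j))) ∨
      (l.2 = false ∧ (e = (.cl1 j, .lower l.1 j) ∨ e = (.lower l.1 j, .cl2 j))) }

/-- The arcs `(s1, C_1^{(1)})`, `(C_m^{(2)}, t1)` and `(C_j^{(2)}, C_{j+1}^{(1)})`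
chaining the clause nodes. -/
def chainArcs : Set (Node N m × Node N m) :=
  { e | (∃ h : 0 < m, e = (.s1, .cl1 ⟨0, h⟩)) ∨
        (∃ h : 0 < m, e = (.cl2 ⟨m - 1, by omega⟩, .t1)) ∨
        (∃ j j' : Fin m, j'.val = j.val + 1 ∧ e = (.cl2 j, .cl1 j')) }

/-- The arcs of the variable–clause graph built from the formula `F`. -/
def baseArcs (F : Fin m → List (Fin N × Bool)) : Set (Node N m × Node N m) :=
  gadgetArcs ∪ (⋃ j, litArcs F j) ∪ chainArcs

/-- `s₂`: the entry of the first variable gadget. -/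
def s2 : Node N m := .junction 0

/-- The arc set of the variable path encoding the assignment `a`: the lower
path of the gadget of `i` if `a i = 1`, its upper path if `a i = 0`. -/
def assignArcs (a : Fin N → Bool) : Set (Node N m × Node N m) :=
  ⋃ i, if a i then lowerArcs i else upperArcs i

/-- `t₂`: the exit of the last variable gadget. -/
def t2 : Node N m := .junction (Fin.last N)

/-- The arcs of the graph of the Theorem 2 construction: the variable–clause
graph completed with the three arcs `(s₁,t₁)`, `(t₁,s₂)`, `(s₂,t₂)`. -/
def arcsAdv (F : Fin m → List (Fin N × Bool)) : Set (Node N m × Node N m) :=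
  baseArcs F ∪ {((Node.s1 : Node N m), Node.t1), (Node.t1, s2), (s2, t2)}

/-- The first-stage path `X`, formed by the arcs `(s₁,t₁)`, `(t₁,s₂)`, `(s₂,t₂)`. -/
def Xfs : Finset (Node N m × Node N m) :=
  {((Node.s1 : Node N m), Node.t1), (Node.t1, s2), (s2, t2)}

/-- The index in `Fin (2*n)` of the variable `y_i` (the first `n` variables
are `𝕐`, the last `n` are `ℤ`). -/
def yIdx (n : ℕ) (i : Fin n) : Fin (2 * n) := ⟨i.val, by have := i.isLt; omega⟩

/-- `e_{y_i}`: the distinguished arc of the lower path of the gadget of `y_i`. -/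
def ey (n m : ℕ) (i : Fin n) : Node (2 * n) m × Node (2 * n) m :=
  (lowNode (yIdx n i) (0 : Fin (m + 2)), lowNode (yIdx n i) (1 : Fin (m + 2)))

open Classical in
/-- The nominal second-stage costs: `ĉ_e = 1` for `e ∈ {(s₁,t₁),(s₂,t₂)}`,
`ĉ_e = 0` otherwise. -/
noncomputable def chat (n m : ℕ) : Node (2 * n) m × Node (2 * n) m → ℝ :=
  fun e => if e = ((Node.s1 : Node (2 * n) m), Node.t1) ∨ e = (s2, t2) then 1 else 0

open Classical in
/-- The upper bounds on the second-stage costs: `c̄_e = 1` for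
`e ∈ {(s₁,t₁),(s₂,t₂)} ∪ A_y`, `c̄_e = 0` otherwise. -/
noncomputable def cbar (n m : ℕ) : Node (2 * n) m × Node (2 * n) m → ℝ :=
  fun e => if e = ((Node.s1 : Node (2 * n) m), Node.t1) ∨ e = (s2, t2) ∨
              (∃ i : Fin n, e = ey n m i) then 1 else 0

/-- `Û(Γ)`: the extreme scenarios, i.e. those with `c_e ∈ {ĉ_e, c̄_e}` for all
`e` and at most `Γ` arcs at their upper bounds (deviating from nominal). -/
def Uhat (n m Γ : ℕ) : Set ((Node (2 * n) m × Node (2 * n) m) → ℝ) :=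
  { c | (∀ e, c e = chat n m e ∨ c e = cbar n m e) ∧
        { e | c e ≠ chat n m e }.ncard ≤ Γ }

/-! ### Auxiliary machinery -/

lemma mem_pathArcs_mapRange {V : Type*} [DecidableEq V] (f : ℕ → V) (K : ℕ) (e : V × V) :
    e ∈ pathArcs (List.map f (List.range K)) ↔ ∃ p, p + 1 < K ∧ e = (f p, f (p + 1)) := by
  unfold pathArcs
  rw [List.mem_toFinset, List.mem_iff_getElem]
  constructor
  · rintro ⟨i, h, rfl⟩
    have h2 : i + 1 < K := by
      simp [List.length_zip] at h; omega
    refine ⟨i, h2, ?_⟩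
    rw [List.getElem_zip, List.getElem_tail]
    simp
  · rintro ⟨p, hp, rfl⟩
    have hlt : p < ((List.map f (List.range K)).zip (List.map f (List.range K)).tail).length := by
      simp [List.length_zip]; omega
    refine ⟨p, hlt, ?_⟩
    rw [List.getElem_zip, List.getElem_tail]
    simp

lemma isPath_mapRange {V : Type*} (A : Set (V × V)) (s t : V) (f : ℕ → V) (K : ℕ) (hK : 0 < K)
    (hs : f 0 = s) (ht : f (K - 1) = t)
    (hchain : ∀ p, p + 1 < K → (f p, f (p + 1)) ∈ A)
    (hinj : ∀ p < K, ∀ q < K, f p = f q → p = q) :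
    IsPath A s t (List.map f (List.range K)) := by
  refine ⟨?_, ?_, ?_, ?_⟩
  · refine (List.isChain_iff_getElem).mpr ?_
    intro i h
    simp only [List.get_eq_getElem, List.getElem_map, List.getElem_range]
    exact hchain i (by simp at h; omega)
  · obtain ⟨K', rfl⟩ : ∃ K', K = K' + 1 := ⟨K - 1, by omega⟩
    rw [List.head?_map]
    simp [List.range_succ_eq_map, hs]
  · rw [List.getLast?_eq_getElem?]
    have hlen : (List.map f (List.range K)).length = K := by simp
    rw [hlen]
    have h1 : K - 1 < (List.map f (List.range K)).length := by simp; omega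
    rw [List.getElem?_eq_getElem h1]
    simp [ht]
  · exact List.Nodup.map_on
      (fun x hx y hy hxy => hinj x (List.mem_range.mp hx) y (List.mem_range.mp hy) hxy)
      List.nodup_range

/-- Encoding witnessing the finiteness of `Node N m`. -/
def nodeEncode : Node N m → Fin (N + 1) ⊕ Fin N × Fin m ⊕ Fin N × Fin m ⊕ Fin m ⊕ Fin m ⊕ Bool
  | .junction i => .inl i
  | .upper i j => .inr (.inl (i, j))
  | .lower i j => .inr (.inr (.inl (i, j)))
  | .cl1 j => .inr (.inr (.inr (.inl j)))
  | .cl2 j => .inr (.inr (.inr (.inr (.inl j))))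
  | .s1 => .inr (.inr (.inr (.inr (.inr true))))
  | .t1 => .inr (.inr (.inr (.inr (.inr false))))

instance : Finite (Node N m) :=
  Finite.of_injective nodeEncode (by
    intro x y h
    cases x <;> cases y <;> simp_all [nodeEncode])

/-- The node at offset `k` on the path (lower if `a i`, upper otherwise) of gadget `i`. -/
def gnode (a : Fin N → Bool) (i : Fin N) (k : Fin (m + 2)) : Node N m :=
  if a i then lowNode i k else upNode i k

lemma gnode_zero (a : Fin N → Bool) (i : Fin N) {k : Fin (m + 2)} (hk : k.val = 0) :
    gnode a i k = .junction i.castSucc := by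
  simp [gnode, lowNode, upNode, hk]

lemma gnode_last (a : Fin N → Bool) (i : Fin N) {k : Fin (m + 2)} (hk : k.val = m + 1) :
    gnode a i k = .junction i.succ := by
  have h0 : k.val ≠ 0 := by omega
  simp [gnode, lowNode, upNode, hk, h0]

lemma gnode_mid (a : Fin N → Bool) (i : Fin N) {k : Fin (m + 2)} {r : Fin m}
    (hk : k.val = r.val + 1) :
    gnode a i k = if a i then .lower i r else .upper i r := by
  have h0 : k.val ≠ 0 := by omega
  have h1 : k.val ≠ m + 1 := by have := r.isLt; omega
  have : (⟨k.val - 1, by have := k.isLt; omega⟩ : Fin m) = r := by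
    apply Fin.ext; simp [hk]
  simp only [gnode, lowNode, upNode, dif_neg h0, dif_neg h1, this]

/-- The `p`-th node of the variable path `π₂` for assignment `a`. -/
def vf (a : Fin N → Bool) (p : ℕ) : Node N m :=
  if h : p < N * (m + 1) then
    gnode a ⟨p / (m + 1), (Nat.div_lt_iff_lt_mul (Nat.succ_pos m)).mpr h⟩
      ⟨p % (m + 1), lt_of_lt_of_le (Nat.mod_lt _ (Nat.succ_pos m)) (by omega)⟩
  else .junction (Fin.last N)

lemma vf_cases (a : Fin N → Bool) {p : ℕ} (hp : p ≤ N * (m + 1)) :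
    (∃ i : Fin (N + 1), p = i.val * (m + 1) ∧ (vf a p : Node N m) = .junction i) ∨
    (∃ (i : Fin N) (r : Fin m), p = i.val * (m + 1) + r.val + 1 ∧
      ((a i = true ∧ vf a p = .lower i r) ∨ (a i = false ∧ vf a p = .upper i r))) := by
  rcases lt_or_eq_of_le hp with h | h
  · have hd : p / (m + 1) < N := (Nat.div_lt_iff_lt_mul (Nat.succ_pos m)).mpr h
    have hm2 : p % (m + 1) < m + 2 :=
      lt_of_lt_of_le (Nat.mod_lt _ (Nat.succ_pos m)) (by omega)
    have hv : (vf a p : Node N m) = gnode a ⟨p / (m + 1), hd⟩ ⟨p % (m + 1), hm2⟩ := dif_pos h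
    have hdm : (p / (m + 1)) * (m + 1) + p % (m + 1) = p := by
      rw [mul_comm]; exact Nat.div_add_mod p (m + 1)
    rcases Nat.eq_zero_or_pos (p % (m + 1)) with h0 | h0
    · left
      refine ⟨(⟨p / (m + 1), hd⟩ : Fin N).castSucc, ?_, ?_⟩
      · simp only [Fin.coe_castSucc]; omega
      · rw [hv]; exact gnode_zero _ _ h0
    · right
      have hmlt : p % (m + 1) < m + 1 := Nat.mod_lt _ (Nat.succ_pos m)
      have hr : p % (m + 1) - 1 < m := by omega
      refine ⟨⟨p / (m + 1), hd⟩, ⟨p % (m + 1) - 1, hr⟩, by simp only []; omega, ?_⟩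
      rw [hv, gnode_mid a _ (r := ⟨p % (m + 1) - 1, hr⟩) (by simp only []; omega)]
      cases hai : a (⟨p / (m + 1), hd⟩ : Fin N)
      · right; simp [hai]
      · left; simp [hai]
  · left
    refine ⟨Fin.last N, by simp [h.symm], ?_⟩
    rw [vf, dif_neg (not_lt.mpr (le_of_eq h.symm))]

lemma vf_pair (a : Fin N → Bool) {p : ℕ} {i : Fin N} {k : Fin (m + 1)}
    (hp : p = i.val * (m + 1) + k.val) (hps : p + 1 ≤ N * (m + 1)) :
    (vf a p : Node N m) = gnode a i k.castSucc ∧ vf a (p + 1) = gnode a i k.succ := by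
  have hklt := k.isLt
  have hilt := i.isLt
  have hdiv : p / (m + 1) = i.val := by
    rw [hp, mul_comm (i.val), Nat.mul_add_div (Nat.succ_pos m), Nat.div_eq_of_lt hklt]
    omega
  have hmod : p % (m + 1) = k.val := by
    rw [hp, mul_comm (i.val), Nat.mul_add_mod]; exact Nat.mod_eq_of_lt hklt
  have hplt : p < N * (m + 1) := by omega
  constructor
  · have hd : p / (m + 1) < N := (Nat.div_lt_iff_lt_mul (Nat.succ_pos m)).mpr hplt
    have hm2 : p % (m + 1) < m + 2 :=
      lt_of_lt_of_le (Nat.mod_lt _ (Nat.succ_pos m)) (by omega)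
    have hv : (vf a p : Node N m) = gnode a ⟨p / (m + 1), hd⟩ ⟨p % (m + 1), hm2⟩ :=
      dif_pos hplt
    have e1 : (⟨p / (m + 1), hd⟩ : Fin N) = i := Fin.ext hdiv
    have e2 : (⟨p % (m + 1), hm2⟩ : Fin (m + 2)) = k.castSucc := Fin.ext (by simp [hmod])
    rw [hv, e1, e2]
  · rcases Nat.lt_or_ge k.val m with hkm | hkm
    · have h1 : p + 1 = i.val * (m + 1) + (k.val + 1) := by omega
      have hmod2 : (p + 1) % (m + 1) = k.val + 1 := by
        rw [h1, mul_comm (i.val), Nat.mul_add_mod]; exact Nat.mod_eq_of_lt (by omega)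
      have hdiv2 : (p + 1) / (m + 1) = i.val := by
        rw [h1, mul_comm (i.val), Nat.mul_add_div (Nat.succ_pos m),
          Nat.div_eq_of_lt (by omega)]
        omega
      have hlt2 : p + 1 < N * (m + 1) := by
        rcases lt_or_eq_of_le hps with h | h
        · exact h
        · exfalso
          rw [h, Nat.mul_mod_left] at hmod2
          omega
      have hd : (p + 1) / (m + 1) < N := (Nat.div_lt_iff_lt_mul (Nat.succ_pos m)).mpr hlt2
      have hm2 : (p + 1) % (m + 1) < m + 2 :=
        lt_of_lt_of_le (Nat.mod_lt _ (Nat.succ_pos m)) (by omega)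
      have hv : (vf a (p + 1) : Node N m) =
          gnode a ⟨(p + 1) / (m + 1), hd⟩ ⟨(p + 1) % (m + 1), hm2⟩ := dif_pos hlt2
      have e1 : (⟨(p + 1) / (m + 1), hd⟩ : Fin N) = i := Fin.ext hdiv2
      have e2 : (⟨(p + 1) % (m + 1), hm2⟩ : Fin (m + 2)) = k.succ := Fin.ext (by simp [hmod2])
      rw [hv, e1, e2]
    · have hk : k.val = m := by omega
      have h1 : p + 1 = (i.val + 1) * (m + 1) := by rw [hp, hk]; ring
      have hsucc : gnode a i k.succ = .junction i.succ := gnode_last a i (by simp [hk])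
      rw [hsucc]
      rcases lt_or_eq_of_le hps with h | h
      · have hd : (p + 1) / (m + 1) < N := (Nat.div_lt_iff_lt_mul (Nat.succ_pos m)).mpr h
        have hm2 : (p + 1) % (m + 1) < m + 2 :=
          lt_of_lt_of_le (Nat.mod_lt _ (Nat.succ_pos m)) (by omega)
        have hv : (vf a (p + 1) : Node N m) =
            gnode a ⟨(p + 1) / (m + 1), hd⟩ ⟨(p + 1) % (m + 1), hm2⟩ := dif_pos h
        have hdiv2 : (p + 1) / (m + 1) = i.val + 1 := by
          rw [h1]; exact Nat.mul_div_cancel _ (Nat.succ_pos m)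
        have hmod2 : (p + 1) % (m + 1) = 0 := by rw [h1]; exact Nat.mul_mod_left _ _
        rw [hv, gnode_zero _ _ hmod2]
        congr 1
        apply Fin.ext
        simp [hdiv2]
      · rw [vf, dif_neg (not_lt.mpr (le_of_eq h.symm))]
        congr 1
        apply Fin.ext
        have hiN : i.val + 1 = N := by
          apply Nat.eq_of_mul_eq_mul_right (show 0 < m + 1 by omega)
          omega
        simp [Fin.last, hiN]

lemma vf_zero (a : Fin N → Bool) (h : 0 < N * (m + 1)) : (vf a 0 : Node N m) = s2 := by
  have hd : 0 / (m + 1) < N := (Nat.div_lt_iff_lt_mul (Nat.succ_pos m)).mpr h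
  have hm2 : 0 % (m + 1) < m + 2 :=
    lt_of_lt_of_le (Nat.mod_lt _ (Nat.succ_pos m)) (by omega)
  have hv : (vf a 0 : Node N m) = gnode a ⟨0 / (m + 1), hd⟩ ⟨0 % (m + 1), hm2⟩ := dif_pos h
  rw [hv, gnode_zero _ _ (by simp)]
  unfold s2
  congr 1
  apply Fin.ext
  simp

lemma vf_last (a : Fin N → Bool) : (vf a (N * (m + 1)) : Node N m) = t2 := by
  rw [vf, dif_neg (lt_irrefl _)]; rfl

lemma vf_inj (a : Fin N → Bool) {p q : ℕ} (hp : p ≤ N * (m + 1)) (hq : q ≤ N * (m + 1))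
    (h : (vf a p : Node N m) = vf a q) : p = q := by
  rcases vf_cases a hp with ⟨i, hpi, hv⟩ | ⟨i, r, hpi, hv⟩ <;>
    rcases vf_cases a hq with ⟨i', hqi, hv'⟩ | ⟨i', r', hqi, hv'⟩
  · rw [hv, hv'] at h
    injection h with h1
    subst h1
    omega
  · rcases hv' with ⟨_, hv'⟩ | ⟨_, hv'⟩ <;> rw [hv, hv'] at h <;> exact nomatch h
  · rcases hv with ⟨_, hv⟩ | ⟨_, hv⟩ <;> rw [hv, hv'] at h <;> exact nomatch h
  · rcases hv with ⟨ha1, hv⟩ | ⟨ha1, hv⟩ <;> rcases hv' with ⟨ha2, hv'⟩ | ⟨ha2, hv'⟩ <;>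
      rw [hv, hv'] at h
    · injection h with h1 h2; subst h1; subst h2; omega
    · exact nomatch h
    · exact nomatch h
    · injection h with h1 h2; subst h1; subst h2; omega

lemma assignArcs_subset_arcsAdv (F : Fin m → List (Fin N × Bool)) (a : Fin N → Bool) :
    assignArcs a ⊆ arcsAdv F := by
  intro e he
  rcases Set.mem_iUnion.mp he with ⟨i, hi⟩
  have hg : e ∈ gadgetArcs (N := N) (m := m) := by
    refine Set.mem_iUnion.mpr ⟨i, ?_⟩
    split_ifs at hi with h
    exacts [Or.inr hi, Or.inl hi]
  exact Or.inl (Or.inl (Or.inl hg))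

lemma litArcs_subset_arcsAdv (F : Fin m → List (Fin N × Bool)) (j : Fin m) :
    litArcs F j ⊆ arcsAdv F :=
  fun _ he => Or.inl (Or.inl (Or.inr (Set.mem_iUnion.mpr ⟨j, he⟩)))

lemma chainArcs_subset_arcsAdv (F : Fin m → List (Fin N × Bool)) :
    chainArcs ⊆ arcsAdv (N := N) F :=
  fun _ he => Or.inl (Or.inr he)

lemma vf_arc_mem (a : Fin N → Bool) {p : ℕ} (hps : p + 1 ≤ N * (m + 1)) :
    ((vf a p : Node N m), vf a (p + 1)) ∈ assignArcs a := by
  have hplt : p < N * (m + 1) := by omega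
  have hd : p / (m + 1) < N := (Nat.div_lt_iff_lt_mul (Nat.succ_pos m)).mpr hplt
  have hp : p = (⟨p / (m + 1), hd⟩ : Fin N).val * (m + 1) +
      (⟨p % (m + 1), Nat.mod_lt _ (Nat.succ_pos m)⟩ : Fin (m + 1)).val := by
    show p = p / (m + 1) * (m + 1) + p % (m + 1)
    rw [mul_comm]
    exact (Nat.div_add_mod p (m + 1)).symm
  set i : Fin N := ⟨p / (m + 1), hd⟩
  set k : Fin (m + 1) := ⟨p % (m + 1), Nat.mod_lt _ (Nat.succ_pos m)⟩
  obtain ⟨h1, h2⟩ := vf_pair a hp hps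
  rw [h1, h2]
  refine Set.mem_iUnion.mpr ⟨i, ?_⟩
  unfold gnode
  cases hai : a i <;> simp only [hai, if_false, if_true, Bool.false_eq_true]
  · exact ⟨k, rfl⟩
  · exact ⟨k, rfl⟩

lemma mem_assignArcs (a : Fin N → Bool) {e : Node N m × Node N m} (he : e ∈ assignArcs a) :
    ∃ p, p + 1 ≤ N * (m + 1) ∧ e = (vf a p, vf a (p + 1)) := by
  rcases Set.mem_iUnion.mp he with ⟨i, hi⟩
  have hbound : ∀ k : Fin (m + 1), i.val * (m + 1) + k.val + 1 ≤ N * (m + 1) := by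
    intro k
    have h1 := i.isLt
    have h2 := k.isLt
    calc i.val * (m + 1) + k.val + 1 ≤ i.val * (m + 1) + (m + 1) := by omega
    _ = (i.val + 1) * (m + 1) := by ring
    _ ≤ N * (m + 1) := Nat.mul_le_mul_right _ (by omega)
  have key : ∀ k : Fin (m + 1), e = (gnode a i k.castSucc, gnode a i k.succ) →
      ∃ p, p + 1 ≤ N * (m + 1) ∧ e = (vf a p, vf a (p + 1)) := by
    intro k hek
    refine ⟨i.val * (m + 1) + k.val, hbound k, ?_⟩
    obtain ⟨h1, h2⟩ := vf_pair a (i := i) (k := k) rfl (hbound k)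
    rw [h1, h2, hek]
  split_ifs at hi with hai
  · obtain ⟨k, hk⟩ := hi
    exact key k (by rw [← hk]; unfold gnode; simp [hai])
  · obtain ⟨k, hk⟩ := hi
    exact key k (by rw [← hk]; unfold gnode; simp [hai])

lemma pathArcs_vf (a : Fin N → Bool) :
    (↑(pathArcs (List.map (vf (m := m) a) (List.range (N * (m + 1) + 1)))) :
      Set (Node N m × Node N m)) = assignArcs a := by
  ext e
  rw [Finset.mem_coe, mem_pathArcs_mapRange]
  constructor
  · rintro ⟨p, hp, rfl⟩
    exact vf_arc_mem a (by omega)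
  · intro he
    obtain ⟨p, hp, hep⟩ := mem_assignArcs a he
    exact ⟨p, by omega, hep⟩

/-- The `p`-th node of the clause path `π₁` where `ln j` is the chosen literal
node inside clause gadget `j`. -/
def cf (ln : Fin m → Node N m) (p : ℕ) : Node N m :=
  if p = 0 then .s1
  else if h : 1 ≤ p ∧ p ≤ 3 * m then
    if (p - 1) % 3 = 0 then .cl1 ⟨(p - 1) / 3, by omega⟩
    else if (p - 1) % 3 = 1 then ln ⟨(p - 1) / 3, by omega⟩
    else .cl2 ⟨(p - 1) / 3, by omega⟩
  else .t1

lemma cf_zero (ln : Fin m → Node N m) : cf ln 0 = .s1 := by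
  rw [cf, if_pos rfl]

lemma cf_t1 (ln : Fin m → Node N m) : cf ln (3 * m + 1) = .t1 := by
  rw [cf, if_neg (by omega), dif_neg (by omega)]

lemma cf_cl1 (ln : Fin m → Node N m) (j : Fin m) : cf ln (3 * j.val + 1) = .cl1 j := by
  have hj := j.isLt
  rw [cf, if_neg (by omega), dif_pos (by omega), if_pos (by omega)]
  congr 1
  apply Fin.ext
  show (3 * j.val + 1 - 1) / 3 = j.val
  omega

lemma cf_mid (ln : Fin m → Node N m) (j : Fin m) : cf ln (3 * j.val + 2) = ln j := by
  have hj := j.isLt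
  rw [cf, if_neg (by omega), dif_pos (by omega), if_neg (by omega), if_pos (by omega)]
  congr 1
  apply Fin.ext
  show (3 * j.val + 2 - 1) / 3 = j.val
  omega

lemma cf_cl2 (ln : Fin m → Node N m) (j : Fin m) : cf ln (3 * j.val + 3) = .cl2 j := by
  have hj := j.isLt
  rw [cf, if_neg (by omega), dif_pos (by omega), if_neg (by omega), if_neg (by omega)]
  congr 1
  apply Fin.ext
  show (3 * j.val + 3 - 1) / 3 = j.val
  omega

lemma cf_cases (ln : Fin m → Node N m) {p : ℕ} (hp : p ≤ 3 * m + 1) :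
    (p = 0 ∧ (cf ln p : Node N m) = .s1) ∨ (p = 3 * m + 1 ∧ cf ln p = .t1) ∨
    ∃ j : Fin m, (p = 3 * j.val + 1 ∧ cf ln p = .cl1 j) ∨
      (p = 3 * j.val + 2 ∧ cf ln p = ln j) ∨ (p = 3 * j.val + 3 ∧ cf ln p = .cl2 j) := by
  by_cases h0 : p = 0
  · exact Or.inl ⟨h0, h0 ▸ cf_zero ln⟩
  by_cases ht : p = 3 * m + 1
  · exact Or.inr (Or.inl ⟨ht, ht ▸ cf_t1 ln⟩)
  have hj : (p - 1) / 3 < m := by omega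
  obtain ⟨j, hjv⟩ : ∃ j : Fin m, j.val = (p - 1) / 3 := ⟨⟨(p - 1) / 3, hj⟩, rfl⟩
  refine Or.inr (Or.inr ⟨j, ?_⟩)
  have h3 : (p - 1) % 3 = 0 ∨ (p - 1) % 3 = 1 ∨ (p - 1) % 3 = 2 := by omega
  rcases h3 with h3 | h3 | h3
  · exact Or.inl ⟨by omega, by rw [show p = 3 * j.val + 1 by omega, cf_cl1]⟩
  · exact Or.inr (Or.inl ⟨by omega, by rw [show p = 3 * j.val + 2 by omega, cf_mid]⟩)
  · exact Or.inr (Or.inr ⟨by omega, by rw [show p = 3 * j.val + 3 by omega, cf_cl2]⟩)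
/-- Theorem 2 construction, direction `⇒`.  Let
`c ∈ Û(Γ^d)` be an extreme scenario and `A'_y ⊆ A_y` the arcs of `A_y` of cost
`1` under `c` (so `|A'_y| ≤ Γ^d`).  If `a` is an assignment of `𝕐 ∪ ℤ`
satisfying `ϝ` with `y_i = 0` whenever `e_{y_i} ∈ A'_y`, then the path `Y`
obtained by concatenating the clause path `π₁` (from `s₁` to `t₁`), the arc
`(t₁,s₂)`, and the variable path `π₂` (from `s₂` to `t₂`) corresponding to
`a` is a simple `s`–`t` path with `|X ∖ Y| ≤ 2` (i.e. `Y ∈ Φ^excl(X,2)`),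
`Y` avoids all arcs of `A'_y`, and `∑_{e ∈ Y} c_e = 0`. -/
theorem stmt7 (n m Γd : ℕ) (hn : 0 < n) (hm : 0 < m)
    (F : Fin m → List (Fin (2 * n) × Bool))
    (c : (Node (2 * n) m × Node (2 * n) m) → ℝ) (hc : c ∈ Uhat n m Γd)
    (A'y : Set (Node (2 * n) m × Node (2 * n) m))
    (hA'y : A'y = { e | (∃ i : Fin n, e = ey n m i) ∧ c e = 1 })
    (a : Fin (2 * n) → Bool) (hsat : Satisfies F a)
    (ha : ∀ i : Fin n, ey n m i ∈ A'y → a (yIdx n i) = false) :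
    A'y.ncard ≤ Γd ∧
    ∃ π1 π2 : List (Node (2 * n) m),
      IsPath (arcsAdv F) .s1 .t1 π1 ∧ IsPath (arcsAdv F) s2 t2 π2 ∧
      (↑(pathArcs π2) : Set (Node (2 * n) m × Node (2 * n) m)) = assignArcs a ∧
      IsPath (arcsAdv F) .s1 t2 (π1 ++ π2) ∧
      (Xfs \ pathArcs (π1 ++ π2)).card ≤ 2 ∧
      (∀ e ∈ A'y, e ∉ pathArcs (π1 ++ π2)) ∧
      ∑ e ∈ pathArcs (π1 ++ π2), c e = 0 := by
  classical
  obtain ⟨hce, hccard⟩ := hc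
  choose l hlF hla using hsat
  obtain ⟨ln, hln⟩ : ∃ ln : Fin m → Node (2 * n) m, ∀ j,
      ((l j).2 = true ∧ a (l j).1 = true ∧ ln j = Node.upper (l j).1 j) ∨
      ((l j).2 = false ∧ a (l j).1 = false ∧ ln j = Node.lower (l j).1 j) := by
    refine ⟨fun j => if (l j).2 then .upper (l j).1 j else .lower (l j).1 j, fun j => ?_⟩
    cases h2 : (l j).2 with
    | false => exact Or.inr ⟨rfl, by rw [hla j, h2], by simp [h2]⟩
    | true => exact Or.inl ⟨rfl, by rw [hla j, h2], by simp [h2]⟩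
  have lnshape : ∀ j, (∃ v, ln j = Node.upper v j) ∨ (∃ v, ln j = Node.lower v j) := by
    intro j
    rcases hln j with ⟨_, _, h⟩ | ⟨_, _, h⟩
    exacts [Or.inl ⟨_, h⟩, Or.inr ⟨_, h⟩]
  set K1 : ℕ := 3 * m + 2 with hK1
  set K2 : ℕ := 2 * n * (m + 1) + 1 with hK2
  have hK2pos : 0 < 2 * n * (m + 1) := Nat.mul_pos (by omega) (by omega)
  set π1 : List (Node (2 * n) m) := List.map (cf ln) (List.range K1) with hπ1
  set π2 : List (Node (2 * n) m) := List.map (vf a) (List.range K2) with hπ2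
  -- ey decode
  have heyd : ∀ i0 : Fin n, ey n m i0 =
      (Node.junction (yIdx n i0).castSucc, Node.lower (yIdx n i0) ⟨0, hm⟩) := by
    intro i0
    have h0 : ((0 : Fin (m + 2))).val = 0 := rfl
    have h1v : ((1 : Fin (m + 2))).val = 1 := Fin.val_one _
    unfold ey lowNode
    rw [dif_pos h0, dif_neg (by omega), dif_neg (by omega)]
    refine congrArg _ ?_
    congr 1
  -- injectivity of cf via positions
  have hpos : ∀ p ≤ 3 * m + 1, ∀ q ≤ 3 * m + 1, cf ln p = cf ln q → p = q := by
    have key : ∀ p ≤ 3 * m + 1, (fun x : Node (2 * n) m =>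
        match x with
        | .s1 => 0
        | .cl1 j => 3 * j.val + 1
        | .upper _ j => 3 * j.val + 2
        | .lower _ j => 3 * j.val + 2
        | .cl2 j => 3 * j.val + 3
        | .t1 => 3 * m + 1
        | .junction _ => 0) (cf ln p) = p := by
      intro p hp
      rcases cf_cases ln hp with ⟨hp0, hv⟩ | ⟨hp0, hv⟩ |
        ⟨j, ⟨hp0, hv⟩ | ⟨hp0, hv⟩ | ⟨hp0, hv⟩⟩ <;> rw [hv]
      · subst hp0; rfl
      · subst hp0; rfl
      · show 3 * j.val + 1 = p; omega
      · rcases lnshape j with ⟨v, hD⟩ | ⟨v, hD⟩ <;> rw [hD] <;>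
          (show 3 * j.val + 2 = p; omega)
      · show 3 * j.val + 3 = p; omega
    intro p hp q hq h
    have := key p hp
    rw [h, key q hq] at this
    omega
  -- cf values are never junctions (and vf values never clause-side): disjointness
  have hdisj : ∀ p ≤ 3 * m + 1, ∀ q ≤ 2 * n * (m + 1), cf ln p ≠ (vf a q : Node (2 * n) m) := by
    intro p hp q hq h
    rcases vf_cases a hq with ⟨i, hqv, hv'⟩ | ⟨i, r, hqv, ⟨hai, hv'⟩ | ⟨hai, hv'⟩⟩ <;>
      rcases cf_cases ln hp with ⟨_, hv⟩ | ⟨_, hv⟩ | ⟨j, ⟨_, hv⟩ | ⟨_, hv⟩ | ⟨_, hv⟩⟩ <;>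
        rw [hv, hv'] at h <;>
        first
          | (simp at h; done)
          | (rcases hln j with ⟨hb, haj, hD⟩ | ⟨hb, haj, hD⟩ <;> rw [hD] at h <;>
              first
                | (simp at h; done)
                | (injection h with h1 h2; rw [h1] at haj; rw [haj] at hai;
                    exact nomatch hai))
  -- the combined vertex function
  set g : ℕ → Node (2 * n) m := fun p => if p < K1 then cf ln p else vf a (p - K1) with hgdef
  have hg1 : ∀ p, p < K1 → g p = cf ln p := fun p h => if_pos h
  have hg2 : ∀ q, g (K1 + q) = vf a q := by
    intro q
    show (if K1 + q < K1 then cf ln (K1 + q) else vf a (K1 + q - K1)) = vf a q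
    rw [if_neg (by omega)]
    congr 1
    omega
  have hY : π1 ++ π2 = List.map g (List.range (K1 + K2)) := by
    rw [List.range_add, List.map_append, List.map_map]
    congr 1
    · apply List.map_congr_left
      intro x hx
      rw [List.mem_range] at hx
      exact (hg1 x hx).symm
    · apply List.map_congr_left
      intro x _
      exact (hg2 x).symm
  -- chain within the clause path
  have hchain1 : ∀ p, p + 1 < K1 → (cf ln p, cf ln (p + 1)) ∈ arcsAdv F := by
    intro p hp
    rcases cf_cases ln (show p ≤ 3 * m + 1 by omega) with ⟨hp0, hv⟩ | ⟨hp0, hv⟩ |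
      ⟨j, ⟨hp0, hv⟩ | ⟨hp0, hv⟩ | ⟨hp0, hv⟩⟩
    · subst hp0
      rw [hv]
      have h1 : cf ln 1 = Node.cl1 ⟨0, hm⟩ := cf_cl1 ln ⟨0, hm⟩
      rw [show (0 : ℕ) + 1 = 1 from rfl, h1]
      exact chainArcs_subset_arcsAdv F (Or.inl ⟨hm, rfl⟩)
    · omega
    · rw [hv, show p + 1 = 3 * j.val + 2 by omega, cf_mid]
      apply litArcs_subset_arcsAdv F j
      rcases hln j with ⟨hb, _, hD⟩ | ⟨hb, _, hD⟩ <;> rw [hD]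
      · exact ⟨l j, hlF j, Or.inl ⟨hb, Or.inl rfl⟩⟩
      · exact ⟨l j, hlF j, Or.inr ⟨hb, Or.inl rfl⟩⟩
    · rw [hv, show p + 1 = 3 * j.val + 3 by omega, cf_cl2]
      apply litArcs_subset_arcsAdv F j
      rcases hln j with ⟨hb, _, hD⟩ | ⟨hb, _, hD⟩ <;> rw [hD]
      · exact ⟨l j, hlF j, Or.inl ⟨hb, Or.inr rfl⟩⟩
      · exact ⟨l j, hlF j, Or.inr ⟨hb, Or.inr rfl⟩⟩
    · rw [hv]
      rcases Nat.lt_or_ge (j.val + 1) m with hjm | hjm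
      · rw [show p + 1 = 3 * ((⟨j.val + 1, hjm⟩ : Fin m)).val + 1 from by
          show p + 1 = 3 * (j.val + 1) + 1; omega, cf_cl1]
        exact chainArcs_subset_arcsAdv F (Or.inr (Or.inr ⟨j, ⟨j.val + 1, hjm⟩, rfl, rfl⟩))
      · have hj1 : j = (⟨m - 1, by omega⟩ : Fin m) :=
          Fin.ext (by show j.val = m - 1; have := j.isLt; omega)
        rw [show p + 1 = 3 * m + 1 by omega, cf_t1, hj1]
        exact chainArcs_subset_arcsAdv F (Or.inr (Or.inl ⟨hm, rfl⟩))
  -- the three IsPath statements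
  have hP1 : IsPath (arcsAdv F) Node.s1 Node.t1 π1 := by
    rw [hπ1]
    refine isPath_mapRange _ _ _ _ _ (by omega) (cf_zero ln) ?_ hchain1 ?_
    · rw [show K1 - 1 = 3 * m + 1 by omega]
      exact cf_t1 ln
    · intro p hp q hq h
      exact hpos p (by omega) q (by omega) h
  have hP2 : IsPath (arcsAdv F) s2 t2 π2 := by
    rw [hπ2]
    refine isPath_mapRange _ _ _ _ _ (by omega) (vf_zero a hK2pos) ?_ ?_ ?_
    · rw [show K2 - 1 = 2 * n * (m + 1) by omega]
      exact vf_last a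
    · intro p hp
      exact assignArcs_subset_arcsAdv F a (vf_arc_mem a (by omega))
    · intro p hp q hq h
      exact vf_inj a (by omega) (by omega) h
  have ginj : ∀ p < K1 + K2, ∀ q < K1 + K2, g p = g q → p = q := by
    intro p hp q hq h
    by_cases h1 : p < K1 <;> by_cases h2 : q < K1
    · rw [hg1 p h1, hg1 q h2] at h
      exact hpos p (by omega) q (by omega) h
    · rw [hg1 p h1, show q = K1 + (q - K1) by omega, hg2] at h
      exact absurd h (hdisj p (by omega) (q - K1) (by omega))
    · rw [hg1 q h2, show p = K1 + (p - K1) by omega, hg2] at h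
      exact absurd h.symm (hdisj q (by omega) (p - K1) (by omega))
    · rw [show p = K1 + (p - K1) by omega, hg2, show q = K1 + (q - K1) by omega, hg2] at h
      have := vf_inj a (p := p - K1) (q := q - K1) (by omega) (by omega) h
      omega
  have hgchain : ∀ p, p + 1 < K1 + K2 → (g p, g (p + 1)) ∈ arcsAdv F := by
    intro p hp
    rcases Nat.lt_or_ge (p + 1) K1 with h1 | h1
    · rw [hg1 p (by omega), hg1 (p + 1) h1]
      exact hchain1 p h1
    rcases Nat.eq_or_lt_of_le h1 with h2 | h2
    · have hpv : p = 3 * m + 1 := by omega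
      rw [hg1 p (by omega), show p + 1 = K1 + 0 by omega, hg2, vf_zero a hK2pos, hpv, cf_t1]
      exact Or.inr (Or.inr (Or.inl rfl))
    · have hq : p = K1 + (p - K1) := by omega
      rw [hq, hg2, show K1 + (p - K1) + 1 = K1 + (p - K1 + 1) by omega, hg2]
      exact assignArcs_subset_arcsAdv F a (vf_arc_mem a (by omega))
  have hPY : IsPath (arcsAdv F) Node.s1 t2 (π1 ++ π2) := by
    rw [hY]
    refine isPath_mapRange _ _ _ _ _ (by omega) ?_ ?_ hgchain ginj
    · rw [hg1 0 (by omega)]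
      exact cf_zero ln
    · rw [show K1 + K2 - 1 = K1 + (2 * n * (m + 1)) by omega, hg2]
      exact vf_last a
  have hYmem : ∀ e, e ∈ pathArcs (π1 ++ π2) ↔
      ∃ p, p + 1 < K1 + K2 ∧ e = (g p, g (p + 1)) := by
    intro e
    rw [hY]
    exact mem_pathArcs_mapRange g (K1 + K2) e
  -- the boundary arc (t1, s2) is used
  have hts : ((Node.t1 : Node (2 * n) m), s2) ∈ pathArcs (π1 ++ π2) := by
    rw [hYmem]
    refine ⟨3 * m + 1, by omega, ?_⟩
    rw [hg1 (3 * m + 1) (by omega), cf_t1, show 3 * m + 1 + 1 = K1 + 0 by omega, hg2,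
      vf_zero a hK2pos]
  -- avoidance of A'y
  have havoid : ∀ e ∈ A'y, e ∉ pathArcs (π1 ++ π2) := by
    intro e heA hmem
    rw [hA'y] at heA
    obtain ⟨⟨i0, rfl⟩, hc1⟩ := heA
    have hafalse : a (yIdx n i0) = false := ha i0 (by rw [hA'y]; exact ⟨⟨i0, rfl⟩, hc1⟩)
    rw [hYmem] at hmem
    obtain ⟨p, hp, hpe⟩ := hmem
    rw [heyd i0, Prod.ext_iff] at hpe
    obtain ⟨h1, h2⟩ := hpe
    simp only at h1 h2
    rcases Nat.lt_or_ge (p + 1) K1 with hq | hq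
    · rw [hg1 (p + 1) hq] at h2
      rcases cf_cases ln (show p + 1 ≤ 3 * m + 1 by omega) with ⟨hp0, hv⟩ | ⟨hp0, hv⟩ |
        ⟨j, ⟨hp0, hv⟩ | ⟨hp0, hv⟩ | ⟨hp0, hv⟩⟩ <;> rw [hv] at h2
      · exact nomatch h2
      · exact nomatch h2
      · exact nomatch h2
      · -- p + 1 = 3j + 2, so p = 3j + 1 and g p = cl1 j, contradicting h1
        rw [hg1 p (by omega), show p = 3 * j.val + 1 by omega, cf_cl1] at h1
        exact nomatch h1
      · exact nomatch h2
    rcases Nat.eq_or_lt_of_le hq with h2' | h2'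
    · rw [show p + 1 = K1 + 0 by omega, hg2, vf_zero a hK2pos] at h2
      exact nomatch h2
    · rw [show p + 1 = K1 + (p - K1 + 1) by omega, hg2] at h2
      rcases vf_cases a (show p - K1 + 1 ≤ 2 * n * (m + 1) by omega) with
        ⟨i, hqv, hv'⟩ | ⟨i, r, hqv, ⟨hai, hv'⟩ | ⟨hai, hv'⟩⟩ <;> rw [hv'] at h2
      · exact nomatch h2
      · injection h2 with hh1 hh2
        rw [hh1] at hafalse
        rw [hafalse] at hai
        exact nomatch hai
      · exact nomatch h2
  -- arcs of the path never carry the special endpoints arcs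
  have hne : ∀ e ∈ pathArcs (π1 ++ π2),
      e ≠ ((Node.s1 : Node (2 * n) m), Node.t1) ∧ e ≠ ((s2 : Node (2 * n) m), t2) := by
    intro e hmem
    rw [hYmem] at hmem
    obtain ⟨p, hp, rfl⟩ := hmem
    constructor
    · intro hcon
      rw [Prod.ext_iff] at hcon
      obtain ⟨h1, h2⟩ := hcon
      simp only at h1 h2
      rcases Nat.lt_or_ge p K1 with hq | hq
      · rw [hg1 p hq] at h1
        rcases cf_cases ln (show p ≤ 3 * m + 1 by omega) with ⟨hp0, hv⟩ | ⟨hp0, hv⟩ |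
          ⟨j, ⟨hp0, hv⟩ | ⟨hp0, hv⟩ | ⟨hp0, hv⟩⟩ <;> rw [hv] at h1
        · -- p = 0, so g 1 = cl1 ⟨0, hm⟩ ≠ t1
          subst hp0
          rw [hg1 1 (by omega)] at h2
          have hcl : cf ln 1 = Node.cl1 ⟨0, hm⟩ := cf_cl1 ln ⟨0, hm⟩
          rw [hcl] at h2
          exact nomatch h2
        · exact nomatch h1
        · exact nomatch h1
        · rcases lnshape j with ⟨v, hD⟩ | ⟨v, hD⟩ <;> rw [hD] at h1 <;>
            exact nomatch h1
        · exact nomatch h1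
      · rw [show p = K1 + (p - K1) by omega, hg2] at h1
        rcases vf_cases a (show p - K1 ≤ 2 * n * (m + 1) by omega) with
          ⟨i, hqv, hv'⟩ | ⟨i, r, hqv, ⟨hai, hv'⟩ | ⟨hai, hv'⟩⟩ <;> rw [hv'] at h1 <;>
          exact nomatch h1
    · intro hcon
      rw [Prod.ext_iff] at hcon
      obtain ⟨h1, h2⟩ := hcon
      simp only at h1 h2
      rcases Nat.lt_or_ge p K1 with hq | hq
      · rw [hg1 p hq] at h1
        rcases cf_cases ln (show p ≤ 3 * m + 1 by omega) with ⟨hp0, hv⟩ | ⟨hp0, hv⟩ |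
          ⟨j, ⟨hp0, hv⟩ | ⟨hp0, hv⟩ | ⟨hp0, hv⟩⟩ <;> rw [hv] at h1 <;>
          first
            | (simp [s2] at h1; done)
            | (rcases lnshape j with ⟨v, hD⟩ | ⟨v, hD⟩ <;> rw [hD] at h1 <;>
                simp [s2] at h1)
      · rw [show p = K1 + (p - K1) by omega, hg2] at h1
        rcases vf_cases a (show p - K1 ≤ 2 * n * (m + 1) by omega) with
          ⟨i, hqv, hv'⟩ | ⟨i, r, hqv, ⟨hai, hv'⟩ | ⟨hai, hv'⟩⟩ <;> rw [hv'] at h1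
        · -- junction i = s2, so i = 0 and p = K1
          have hi0 : i = 0 := by
            unfold s2 at h1
            injection h1 with hh
            try exact hh
          have hq0 : p - K1 = 0 := by rw [hqv, hi0]; simp
          have hpK1 : p = K1 := by omega
          rw [hpK1, hg2 1] at h2
          rcases vf_cases a (show 1 ≤ 2 * n * (m + 1) by omega) with
            ⟨i', hqv', hv''⟩ | ⟨i', r', hqv', ⟨hai', hv''⟩ | ⟨hai', hv''⟩⟩
          · exfalso
            rcases Nat.eq_zero_or_pos i'.val with hz | hz
            · rw [hz] at hqv'; simp at hqv'
            · have := Nat.le_mul_of_pos_left (m + 1) hz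
              omega
          · rw [hv''] at h2
            exact nomatch h2
          · rw [hv''] at h2
            exact nomatch h2
        · exact nomatch h1
        · exact nomatch h1
  -- cost of every used arc is zero
  have hzero : ∀ e ∈ pathArcs (π1 ++ π2), c e = 0 := by
    intro e hmem
    obtain ⟨hne1, hne2⟩ := hne e hmem
    rcases hce e with h | h
    · rw [h]
      unfold chat
      rw [if_neg (by tauto)]
    · by_cases hey' : ∃ i0 : Fin n, e = ey n m i0
      · exfalso
        obtain ⟨i0, rfl⟩ := hey'
        have hc1 : c (ey n m i0) = 1 := by
          rw [h]
          unfold cbar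
          rw [if_pos (Or.inr (Or.inr ⟨i0, rfl⟩))]
        exact havoid _ (by rw [hA'y]; exact ⟨⟨i0, rfl⟩, hc1⟩) hmem
      · rw [h]
        unfold cbar
        rw [if_neg (by tauto)]
  -- |A'y| ≤ Γd
  have hcard : A'y.ncard ≤ Γd := by
    refine le_trans (Set.ncard_le_ncard ?_ (Set.toFinite _)) hccard
    intro e heA
    rw [hA'y] at heA
    obtain ⟨⟨i0, rfl⟩, hc1⟩ := heA
    have hchat : chat n m (ey n m i0) = 0 := by
      unfold chat
      rw [if_neg (by simp [heyd i0, s2, t2, Prod.ext_iff])]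
    show c (ey n m i0) ≠ chat n m (ey n m i0)
    rw [hc1, hchat]
    norm_num
  refine ⟨hcard, π1, π2, hP1, hP2, pathArcs_vf a, hPY, ?_, havoid, Finset.sum_eq_zero hzero⟩
  -- |X \ Y| ≤ 2
  have hsub : Xfs \ pathArcs (π1 ++ π2) ⊆
      ({((Node.s1 : Node (2 * n) m), Node.t1), (s2, t2)} : Finset _) := by
    intro e he
    rw [Finset.mem_sdiff] at he
    obtain ⟨hx, hnm⟩ := he
    simp only [Xfs, Finset.mem_insert, Finset.mem_singleton] at hx
    rcases hx with rfl | rfl | rfl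
    · simp
    · exact absurd hts hnm
    · simp
  calc (Xfs \ pathArcs (π1 ++ π2)).card
      ≤ ({((Node.s1 : Node (2 * n) m), Node.t1), (s2, t2)} : Finset _).card :=
        Finset.card_le_card hsub
    _ ≤ 2 := le_trans (Finset.card_insert_le _ _) (by simp)

end RRSP
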